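/- Let A = Fin n be a collection of images, C a finite set of locations with |C| ≥ 2, t ∈ C the true location, and S_i : C → ℝ the score vector of image i. For each j ∈ C with j ≠ t define x^j(i) = S_i(j) − S_i(t), and let f(j) be the least d ≤ n such that the sum of the n−d largest values of x^j is ≥ 0 (such d always exists since the empty sum is 0). Then min { |D| : D ⊆ A and there exists j ≠ t with ∑_{i ∉ D} S_i(j) ≥ ∑_{i ∉ D} S_i(t) } = min_{j ≠ t} f(j). That is, the minimum number of deletions needed so that the true location is no longer the strictly most likely prediction equals the minimum over alternate locations j of the greedy per-alternate deletion count. -/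
import Mathlib

open Finset

lemma aux_strictMono_gap {k n : ℕ} (e : Fin k → Fin n) (he : StrictMono e) :
    ∀ m : ℕ, ∀ i j : Fin k, (j : ℕ) = (i : ℕ) + m → (e i : ℕ) + m ≤ (e j : ℕ) := by
  intro m
  induction m with
  | zero => intro i j h; have : i = j := Fin.ext (by omega); simp [this]
  | succ m ih =>
    intro i j h
    have hj' : (i : ℕ) + m < k := by omega
    set j' : Fin k := ⟨(i : ℕ) + m, hj'⟩
    have h1 := ih i j' rfl
    have h2 : e j' < e j := he (by simp [j', Fin.lt_def]; omega)
    have := Fin.lt_def.mp h2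
    omega

lemma aux_orderEmb_le {n k : ℕ} (hk : k ≤ n) (T : Finset (Fin n)) (hT : T.card = k)
    (i : Fin k) : (T.orderEmbOfFin hT i : ℕ) ≤ n - k + (i : ℕ) := by
  have hpos : 0 < k := i.pos
  have hlast : ((T.orderEmbOfFin hT ⟨k - 1, by omega⟩ : Fin n) : ℕ) ≤ n - 1 := by
    have := (T.orderEmbOfFin hT ⟨k - 1, by omega⟩).2
    omega
  have := aux_strictMono_gap _ (T.orderEmbOfFin hT).strictMono (k - 1 - i) i
    ⟨k - 1, by omega⟩ (by simp; omega)
  omega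

lemma aux_key {n d : ℕ} (hd : d ≤ n) (y : Fin n → ℝ)
    (hy : ∀ i i' : Fin n, i ≤ i' → y i ≤ y i')
    (T : Finset (Fin n)) (hT : T.card = n - d) :
    ∑ i ∈ T, y i ≤ ∑ i ∈ univ.filter (fun i : Fin n => d ≤ (i : ℕ)), y i := by
  set k := n - d with hk
  have hkn : k ≤ n := Nat.sub_le _ _
  have hTim : T = Finset.image (T.orderEmbOfFin hT) univ := by
    apply Finset.coe_injective
    rw [Finset.coe_image, Finset.coe_univ, Set.image_univ, Finset.range_orderEmbOfFin]
  have hu : ∀ i : Fin k, d + (i : ℕ) < n := fun i => by omega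
  set u : Fin k → Fin n := fun i => ⟨d + (i : ℕ), hu i⟩ with hudef
  have huinj : Function.Injective u := by
    intro a b hab
    have := Fin.val_eq_val (u a) (u b)
    simp [hudef] at hab
    exact Fin.ext hab
  have hUim : univ.filter (fun i : Fin n => d ≤ (i : ℕ)) = Finset.image u univ := by
    ext m
    simp only [mem_filter, mem_univ, true_and, Finset.mem_image, hudef]
    constructor
    · intro hm
      exact ⟨⟨(m : ℕ) - d, by omega⟩, by apply Fin.ext; simp; omega⟩
    · rintro ⟨i, rfl⟩; simp
  rw [hTim, hUim, Finset.sum_image (fun a _ b _ h => (T.orderEmbOfFin hT).injective h),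
    Finset.sum_image (fun a _ b _ h => huinj h)]
  apply Finset.sum_le_sum
  intro i _
  apply hy
  rw [Fin.le_def]
  have := aux_orderEmb_le hkn T hT i
  simp [hudef]
  omega

lemma aux_image_compl {α : Type*} [Fintype α] [DecidableEq α] (e : Equiv.Perm α)
    (s : Finset α) : (Finset.image e s)ᶜ = Finset.image e sᶜ := by
  ext a
  simp only [Finset.mem_compl, Finset.mem_image]
  constructor
  · intro h
    refine ⟨e.symm a, ?_, e.apply_symm_apply a⟩
    intro hmem
    exact h ⟨e.symm a, hmem, e.apply_symm_apply a⟩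
  · rintro ⟨b, hb, rfl⟩ ⟨c, hc, hcb⟩
    exact hb (e.injective hcb ▸ hc)

lemma aux_card_filter_lt (n d : ℕ) (h : d ≤ n) :
    (Finset.univ.filter (fun i : Fin n => (i : ℕ) < d)).card = d := by
  rw [← Finset.card_range d]
  apply Finset.card_bij (fun (i : Fin n) _ => (i : ℕ))
  · intro a ha; simp only [mem_filter] at ha; simpa using ha.2
  · intro a ha b hb hab; exact Fin.ext hab
  · intro b hb
    simp only [Finset.mem_range] at hb
    exact ⟨⟨b, by omega⟩, by simp [hb], rfl⟩




/-- Correctness of the paper's polynomial-time algorithm for the top-1 guarantee.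
For each alternate location `j ≠ t`, let `σ j` sort the per-image score advantages
`x^j i = S i j − S i t` in ascending order, and let `f j` be the least `d ≤ n` such
that the sum of the `n − d` largest values of `x^j` is nonnegative.  Then the minimum
cardinality of a deletion set `D` for which some alternate location `j ≠ t` has
censored score at least that of the true location `t` equals the minimum of `f j`
over the alternate locations `j ≠ t`. -/
theorem top1_algorithm_correct {C : Type*} [Fintype C] [DecidableEq C]
    (hC : 2 ≤ Fintype.card C) (n : ℕ) (t : C) (S : Fin n → C → ℝ)
    (σ : C → Equiv.Perm (Fin n))
    (hσ : ∀ j : C, ∀ i i' : Fin n, i ≤ i' →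
      S (σ j i) j - S (σ j i) t ≤ S (σ j i') j - S (σ j i') t)
    (f : C → ℕ)
    (hf : ∀ j : C, j ≠ t →
      IsLeast {d : ℕ | d ≤ n ∧
        0 ≤ ∑ i ∈ Finset.univ.filter (fun i : Fin n => d ≤ (i : ℕ)),
              (S (σ j i) j - S (σ j i) t)} (f j)) :
    sInf {m : ℕ | ∃ D : Finset (Fin n), D.card = m ∧
        ∃ j : C, j ≠ t ∧ (∑ i ∈ Dᶜ, S i t) ≤ ∑ i ∈ Dᶜ, S i j} =
      sInf {m : ℕ | ∃ j : C, j ≠ t ∧ f j = m} := by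
  -- For each j ≠ t, the greedy deletion set of size f j works.
  have construct : ∀ j : C, j ≠ t → ∃ D : Finset (Fin n), D.card = f j ∧
      (∑ i ∈ Dᶜ, S i t) ≤ ∑ i ∈ Dᶜ, S i j := by
    intro j hj
    obtain ⟨⟨hfn, hfsum⟩, -⟩ := hf j hj
    refine ⟨Finset.image (σ j) (Finset.univ.filter (fun i : Fin n => (i : ℕ) < f j)), ?_, ?_⟩
    · rw [Finset.card_image_of_injective _ (σ j).injective]
      exact aux_card_filter_lt n (f j) hfn
    · rw [← sub_nonneg, ← Finset.sum_sub_distrib]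
      rw [aux_image_compl, Finset.compl_filter]
      rw [Finset.sum_image (fun a _ b _ h => (σ j).injective h)]
      convert hfsum using 2 with i
      simp [not_lt]
  -- Any successful deletion set for j has size at least f j.
  have lb : ∀ (D : Finset (Fin n)) (j : C), j ≠ t →
      (∑ i ∈ Dᶜ, S i t) ≤ (∑ i ∈ Dᶜ, S i j) → f j ≤ D.card := by
    intro D j hj hle
    refine (hf j hj).2 ⟨Finset.card_le_univ D |>.trans_eq (by simp), ?_⟩
    have h0 : 0 ≤ ∑ i ∈ Dᶜ, (S i j - S i t) := by
      rw [Finset.sum_sub_distrib, sub_nonneg]; exact hle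
    have hT : (Finset.image (σ j).symm Dᶜ).card = n - D.card := by
      rw [Finset.card_image_of_injective _ (σ j).symm.injective, Finset.card_compl,
        Fintype.card_fin]
    calc (0:ℝ) ≤ ∑ i ∈ Dᶜ, (S i j - S i t) := h0
      _ = ∑ i ∈ Finset.image (σ j).symm Dᶜ, (S (σ j i) j - S (σ j i) t) := by
          rw [Finset.sum_image (fun a _ b _ h => (σ j).symm.injective h)]
          simp
      _ ≤ _ := aux_key (Finset.card_le_univ D |>.trans_eq (by simp))
          (fun i => S (σ j i) j - S (σ j i) t) (hσ j) _ hT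
  obtain ⟨j₀, hj₀⟩ := Fintype.exists_ne_of_one_lt_card (by omega) t
  have hneR : {m : ℕ | ∃ j : C, j ≠ t ∧ f j = m}.Nonempty := ⟨f j₀, j₀, hj₀, rfl⟩
  have hneL : {m : ℕ | ∃ D : Finset (Fin n), D.card = m ∧
      ∃ j : C, j ≠ t ∧ (∑ i ∈ Dᶜ, S i t) ≤ ∑ i ∈ Dᶜ, S i j}.Nonempty := by
    obtain ⟨D, hD, hle⟩ := construct j₀ hj₀
    exact ⟨D.card, D, rfl, j₀, hj₀, hle⟩
  apply le_antisymm
  · obtain ⟨j, hj, hfj⟩ := Nat.sInf_mem hneR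
    obtain ⟨D, hD, hle⟩ := construct j hj
    rw [← hfj, ← hD]
    exact Nat.sInf_le ⟨D, rfl, j, hj, hle⟩
  · obtain ⟨D, hD, j, hj, hle⟩ := Nat.sInf_mem hneL
    rw [← hD]
    exact le_trans (Nat.sInf_le ⟨j, hj, rfl⟩) (lb D j hj hle)
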